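/- For each p ∈ [1,∞], the set A_p of U-invariant functions in L^p(E,m) is a vector lattice with respect to the pointwise order: in particular, if u is U-invariant then |u|, u⁺, and u⁻ are U-invariant. -/

import Mathlib

open MeasureTheory ENNReal Filter Set

/-- A sub-Markovian resolvent of kernels on a measurable space `E`. -/
structure SubMarkovResolvent (E : Type*) [MeasurableSpace E] where
  /-- the kernel `U_α` for each `α > 0` -/
  kernel : ℝ → E → MeasureTheory.Measure E
  measurable_op : ∀ α : ℝ, 0 < α → ∀ f : E → ℝ≥0∞, Measurable f →
    Measurable (fun x => ∫⁻ y, f y ∂(kernel α x))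
  resolvent_eq : ∀ α β : ℝ, 0 < α → α ≤ β → ∀ f : E → ℝ≥0∞, Measurable f → ∀ x,
    ∫⁻ y, f y ∂(kernel α x)
      = (∫⁻ y, f y ∂(kernel β x))
        + ENNReal.ofReal (β - α) * ∫⁻ y, (∫⁻ z, f z ∂(kernel β y)) ∂(kernel α x)
  subMarkov : ∀ α : ℝ, 0 < α → ∀ x, ENNReal.ofReal α * kernel α x Set.univ ≤ 1

namespace SubMarkovResolvent

variable {E : Type*} [MeasurableSpace E]

/-- The action of `U_α` on positive measurable functions. -/
noncomputable def op (R : SubMarkovResolvent E) (α : ℝ) (f : E → ℝ≥0∞) (x : E) : ℝ≥0∞ :=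
  ∫⁻ y, f y ∂(R.kernel α x)

/-- The action of `U_α` on real-valued functions. -/
noncomputable def opR (R : SubMarkovResolvent E) (α : ℝ) (f : E → ℝ) (x : E) : ℝ :=
  ∫ y, f y ∂(R.kernel α x)

/-- The initial (potential) kernel `U = sup_{α > 0} U_α`. -/
noncomputable def pot (R : SubMarkovResolvent E) (f : E → ℝ≥0∞) (x : E) : ℝ≥0∞ :=
  ⨆ (α : ℝ) (_ : 0 < α), R.op α f x

/-- `m` is sub-invariant: `m ∘ (α U_α) ≤ m` for all `α > 0`. -/
def SubInvariant (R : SubMarkovResolvent E) (m : Measure E) : Prop :=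
  ∀ α : ℝ, 0 < α → ∀ f : E → ℝ≥0∞, Measurable f →
    ENNReal.ofReal α * ∫⁻ x, R.op α f x ∂m ≤ ∫⁻ x, f x ∂m

/-- `U` is `m`-transient. -/
def Transient (R : SubMarkovResolvent E) (m : Measure E) : Prop :=
  ∃ f : E → ℝ≥0∞, Measurable f ∧ (∫⁻ x, f x ∂m < ⊤) ∧
    (∀ᵐ x ∂m, 0 < f x) ∧ (∀ᵐ x ∂m, R.pot f x < ⊤)

/-- `U` is `m`-recurrent. -/
def Recurrent (R : SubMarkovResolvent E) (m : Measure E) : Prop :=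
  ∀ f : E → ℝ≥0∞, Measurable f → (∫⁻ x, f x ∂m < ⊤) →
    m {x | 0 < R.pot f x ∧ R.pot f x < ⊤} = 0

/-- `A` is `U`-absorbing with respect to `m`. -/
def Absorbing (R : SubMarkovResolvent E) (m : Measure E) (A : Set E) : Prop :=
  MeasurableSet A ∧ ∀ᵐ x ∂m, x ∈ A → R.pot (Set.indicator Aᶜ 1) x = 0

/-- `U` is `m`-irreducible. -/
def Irreducible (R : SubMarkovResolvent E) (m : Measure E) : Prop :=
  ∀ A : Set E, R.Absorbing m A → m A = 0 ∨ m Aᶜ = 0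

/-- `u` is `U`-excessive: supermedian and `α U_α u ↑ u` as `α → ∞`. -/
def Excessive (R : SubMarkovResolvent E) (u : E → ℝ≥0∞) : Prop :=
  Measurable u ∧ (∀ α : ℝ, 0 < α → ∀ x, ENNReal.ofReal α * R.op α u x ≤ u x) ∧
    (∀ x, (⨆ (α : ℝ) (_ : 0 < α), ENNReal.ofReal α * R.op α u x) = u x)

/-- The complete maximum principle for the initial kernel of `U`. -/
def CompleteMaxPrinciple (R : SubMarkovResolvent E) : Prop :=
  ∀ (f g : E → ℝ≥0∞) (c : ℝ≥0∞), Measurable f → Measurable g →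
    (∀ x, 0 < f x → R.pot f x ≤ R.pot g x + c) → ∀ x, R.pot f x ≤ R.pot g x + c

/-- `U` and `U*` are in weak duality with respect to `m`. -/
def InDuality (R S : SubMarkovResolvent E) (m : Measure E) : Prop :=
  ∀ α : ℝ, 0 < α → ∀ f g : E → ℝ≥0∞, Measurable f → Measurable g →
    ∫⁻ x, f x * R.op α g x ∂m = ∫⁻ x, g x * S.op α f x ∂m

/-- A real-valued function `v` is `U`-invariant with respect to `m`:
`U_α(v f) = v ⋅ U_α f` `m`-a.e. for all `α > 0` and bounded positive measurable `f`. -/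
def Invariant (R : SubMarkovResolvent E) (m : Measure E) (v : E → ℝ) : Prop :=
  ∀ α : ℝ, 0 < α → ∀ f : E → ℝ, Measurable f → (∀ x, 0 ≤ f x) → (∃ C : ℝ, ∀ x, f x ≤ C) →
    ∀ᵐ x ∂m, R.opR α (fun y => v y * f y) x = v x * R.opR α f x

end SubMarkovResolvent

namespace SubMarkovResolvent

variable {E : Type*} [MeasurableSpace E]

lemma kernel_univ_ne_top (R : SubMarkovResolvent E) {α : ℝ} (hα : 0 < α) (x : E) :
    R.kernel α x Set.univ ≠ ⊤ := by
  intro h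
  have hs := R.subMarkov α hα x
  rw [h, ENNReal.mul_top (by simpa [ENNReal.ofReal_eq_zero] using hα)] at hs
  simp at hs

lemma integrable_of_bdd (R : SubMarkovResolvent E) {α : ℝ} (hα : 0 < α) (x : E)
    {f : E → ℝ} (hf : Measurable f) {C : ℝ} (hC : ∀ y, |f y| ≤ C) :
    Integrable f (R.kernel α x) := by
  refine ⟨hf.aestronglyMeasurable, ?_⟩
  have hb : ∀ y, (‖f y‖₊ : ℝ≥0∞) ≤ ENNReal.ofReal C := by
    intro y
    rw [← enorm_eq_nnnorm, ← ofReal_norm]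
    exact ENNReal.ofReal_le_ofReal (by simpa [Real.norm_eq_abs] using hC y)
  calc (∫⁻ y, (‖f y‖₊ : ℝ≥0∞) ∂(R.kernel α x))
      ≤ ∫⁻ _, ENNReal.ofReal C ∂(R.kernel α x) := lintegral_mono hb
    _ = ENNReal.ofReal C * R.kernel α x Set.univ := lintegral_const _
    _ < ⊤ := ENNReal.mul_lt_top ENNReal.ofReal_lt_top
        (lt_top_iff_ne_top.mpr (R.kernel_univ_ne_top hα x))

lemma null_transfer (R : SubMarkovResolvent E) {m : Measure E} (hm : R.SubInvariant m)
    {α : ℝ} (hα : 0 < α) {N : Set E} (hN : MeasurableSet N) (hmN : m N = 0) :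
    ∀ᵐ x ∂m, R.kernel α x N = 0 := by
  have hfm : Measurable (N.indicator (1 : E → ℝ≥0∞)) := measurable_one.indicator hN
  have h1 := hm α hα _ hfm
  have h2 : ∫⁻ x, N.indicator (1 : E → ℝ≥0∞) x ∂m = 0 := by
    rw [lintegral_indicator_one hN, hmN]
  rw [h2, le_zero_iff, mul_eq_zero] at h1
  have hα0 : (ENNReal.ofReal α) ≠ 0 := by simpa [ENNReal.ofReal_eq_zero] using hα
  have h3 : ∫⁻ x, R.op α (N.indicator 1) x ∂m = 0 := h1.resolve_left hα0
  have hmeas : Measurable fun x => R.op α (N.indicator 1) x := R.measurable_op α hα _ hfm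
  filter_upwards [(lintegral_eq_zero_iff hmeas).mp h3] with x hx
  rw [← lintegral_indicator_one hN]
  exact hx

lemma aux_mul_lt_top {a X Y : ℝ≥0∞} (ha : a ≠ 0) (h : a * X ≤ Y) (hY : Y < ⊤) : X < ⊤ := by
  by_contra hX
  rw [not_lt, top_le_iff] at hX
  subst hX
  rw [ENNReal.mul_top ha] at h
  exact hY.ne (top_le_iff.mp h)

lemma aux_le_rpow_add_one {a : ℝ≥0∞} {r : ℝ} (hr : 1 ≤ r) : a ≤ a ^ r + 1 := by
  rcases le_total a 1 with h | h
  · exact h.trans le_add_self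
  · calc a = a ^ (1 : ℝ) := (ENNReal.rpow_one a).symm
      _ ≤ a ^ r := ENNReal.rpow_le_rpow_of_exponent_le h hr
      _ ≤ a ^ r + 1 := le_self_add

/-- Key integrability: for a.e. `x`, an `L^p` function is integrable w.r.t. `kernel α x`,
and a measurable representative agrees with it `kernel α x`-a.e. -/
lemma ae_integrable (R : SubMarkovResolvent E) {m : Measure E} (hm : R.SubInvariant m)
    {p : ℝ≥0∞} (hp : 1 ≤ p) {u : E → ℝ} (hu : MeasureTheory.MemLp u p m)
    {α : ℝ} (hα : 0 < α) :
    ∃ u' : E → ℝ, Measurable u' ∧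
      ∀ᵐ x ∂m, (∀ᵐ y ∂(R.kernel α x), u y = u' y) ∧ Integrable u (R.kernel α x) := by
  obtain ⟨u', hsm, heq⟩ : ∃ u', StronglyMeasurable u' ∧ u =ᵐ[m] u' :=
    ⟨hu.1.mk u, hu.1.stronglyMeasurable_mk, hu.1.ae_eq_mk⟩
  have hu'm : Measurable u' := hsm.measurable
  -- kernel-a.e. equality
  have hne : m {x | ¬ u x = u' x} = 0 := ae_iff.mp heq
  obtain ⟨N, hsub, hNmeas, hN0⟩ := exists_measurable_superset_of_null hne
  have hker_eq : ∀ᵐ x ∂m, ∀ᵐ y ∂(R.kernel α x), u y = u' y := by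
    filter_upwards [R.null_transfer hm hα hNmeas hN0] with x hx
    exact ae_iff.mpr (measure_mono_null hsub hx)
  -- finiteness of ∫⁻ ‖u'‖
  have hα0 : (ENNReal.ofReal α) ≠ 0 := by simpa [ENNReal.ofReal_eq_zero] using hα
  have hfin : ∀ᵐ x ∂m, (∫⁻ y, (‖u' y‖₊ : ℝ≥0∞) ∂(R.kernel α x)) < ⊤ := by
    by_cases hptop : p = ⊤
    · -- essentially bounded case
      set C : ℝ≥0∞ := eLpNormEssSup u m with hCdef
      have hCfin : C < ⊤ := by
        have := hu.2
        rwa [hptop, eLpNorm_exponent_top] at this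
      have hCae : ∀ᵐ y ∂m, (‖u' y‖₊ : ℝ≥0∞) ≤ C := by
        filter_upwards [heq, ae_le_eLpNormEssSup (f := u) (μ := m)] with y h1 h2
        rw [← h1]; exact h2
      obtain ⟨S, hSsub, hSmeas, hS0⟩ :=
        exists_measurable_superset_of_null (ae_iff.mp hCae)
      filter_upwards [R.null_transfer hm hα hSmeas hS0] with x hx
      have hae : ∀ᵐ y ∂(R.kernel α x), (‖u' y‖₊ : ℝ≥0∞) ≤ C :=
        ae_iff.mpr (measure_mono_null hSsub hx)
      calc (∫⁻ y, (‖u' y‖₊ : ℝ≥0∞) ∂(R.kernel α x))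
          ≤ ∫⁻ _, C ∂(R.kernel α x) := lintegral_mono_ae hae
        _ = C * R.kernel α x Set.univ := lintegral_const _
        _ < ⊤ := ENNReal.mul_lt_top hCfin
            (lt_top_iff_ne_top.mpr (R.kernel_univ_ne_top hα x))
    · -- p < ∞
      have hr : 1 ≤ p.toReal := by
        rw [← ENNReal.toReal_one]
        exact (ENNReal.toReal_le_toReal (by simp) hptop).mpr hp
      set g : E → ℝ≥0∞ := fun y => (‖u' y‖₊ : ℝ≥0∞) ^ p.toReal with hgdef
      have hgmeas : Measurable g := hu'm.nnnorm.coe_nnreal_ennreal.pow_const _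
      have hgint : ∫⁻ y, g y ∂m < ⊤ := by
        have h1 : (∫⁻ y, (‖u y‖₊ : ℝ≥0∞) ^ p.toReal ∂m) < ⊤ :=
          lintegral_rpow_enorm_lt_top_of_eLpNorm_lt_top
            (by rintro rfl; simp at hp) hptop hu.2
        have h2 : ∫⁻ y, g y ∂m = ∫⁻ y, (‖u y‖₊ : ℝ≥0∞) ^ p.toReal ∂m := by
          refine lintegral_congr_ae ?_
          filter_upwards [heq] with y hy
          rw [hgdef]; simp [hy]
        rwa [h2]
      have hsub' := hm α hα g hgmeas
      have hopfin : ∫⁻ x, R.op α g x ∂m < ⊤ := aux_mul_lt_top hα0 hsub' hgint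
      filter_upwards [ae_lt_top (R.measurable_op α hα g hgmeas) hopfin.ne] with x hx
      calc (∫⁻ y, (‖u' y‖₊ : ℝ≥0∞) ∂(R.kernel α x))
          ≤ ∫⁻ y, g y + 1 ∂(R.kernel α x) :=
            lintegral_mono fun y => aux_le_rpow_add_one hr
        _ = (∫⁻ y, g y ∂(R.kernel α x)) + R.kernel α x Set.univ := by
            rw [lintegral_add_right _ measurable_const, lintegral_one]
        _ < ⊤ := ENNReal.add_lt_top.mpr
            ⟨hx, lt_top_iff_ne_top.mpr (R.kernel_univ_ne_top hα x)⟩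
  refine ⟨u', hu'm, ?_⟩
  filter_upwards [hker_eq, hfin] with x h1 h2
  refine ⟨h1, (Integrable.congr ⟨hsm.aestronglyMeasurable, h2⟩ ?_)⟩
  exact (Filter.EventuallyEq.symm h1)

lemma inv_smul (R : SubMarkovResolvent E) {m : Measure E} {u : E → ℝ}
    (hui : R.Invariant m u) (c : ℝ) : R.Invariant m (c • u) := by
  intro α hα f hf hf0 hfC
  filter_upwards [hui α hα f hf hf0 hfC] with x h1
  simp only [SubMarkovResolvent.opR, Pi.smul_apply, smul_eq_mul] at h1 ⊢
  have he : (fun y => c * u y * f y) = fun y => c • (u y * f y) := by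
    funext y; simp [smul_eq_mul]; ring
  rw [he, integral_smul, h1, smul_eq_mul]; ring

lemma inv_add (R : SubMarkovResolvent E) {m : Measure E} (hm : R.SubInvariant m)
    {p : ℝ≥0∞} (hp : 1 ≤ p) {u v : E → ℝ}
    (hu : MeasureTheory.MemLp u p m) (hv : MeasureTheory.MemLp v p m)
    (hui : R.Invariant m u) (hvi : R.Invariant m v) : R.Invariant m (u + v) := by
  intro α hα f hf hf0 hfC
  obtain ⟨C, hC⟩ := hfC
  obtain ⟨u', hu'm, hu'⟩ := R.ae_integrable hm hp hu hα
  obtain ⟨v', hv'm, hv'⟩ := R.ae_integrable hm hp hv hα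
  have habs : ∀ y, ‖f y‖ ≤ C := fun y => by
    rw [Real.norm_eq_abs, abs_of_nonneg (hf0 y)]; exact hC y
  filter_upwards [hui α hα f hf hf0 ⟨C, hC⟩, hvi α hα f hf hf0 ⟨C, hC⟩, hu', hv']
    with x h1 h2 h3 h4
  have hmul : ∀ {w : E → ℝ}, Integrable w (R.kernel α x) →
      Integrable (fun y => w y * f y) (R.kernel α x) := by
    intro w hw
    have := hw.bdd_mul hf.aestronglyMeasurable (ae_of_all _ habs)
    exact this.congr (Filter.Eventually.of_forall fun y => mul_comm _ _)
  simp only [SubMarkovResolvent.opR, Pi.add_apply] at h1 h2 ⊢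
  have he : (fun y => (u y + v y) * f y) = fun y => u y * f y + v y * f y := by
    funext y; ring
  rw [he, integral_add (hmul h3.2) (hmul h4.2), h1, h2]; ring

lemma inv_abs (R : SubMarkovResolvent E) {m : Measure E} (hm : R.SubInvariant m)
    {p : ℝ≥0∞} (hp : 1 ≤ p) {u : E → ℝ} (hu : MeasureTheory.MemLp u p m)
    (hui : R.Invariant m u) : R.Invariant m (fun x => |u x|) := by
  intro α hα f hf hf0 hfC
  obtain ⟨C, hC⟩ := hfC
  obtain ⟨u', hu'm, hu'⟩ := R.ae_integrable hm hp hu hα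
  set A : Set E := {y | 0 ≤ u' y} with hAdef
  have hAm : MeasurableSet A := measurableSet_le measurable_const hu'm
  set f₁ : E → ℝ := A.indicator f with hf₁def
  set f₂ : E → ℝ := Aᶜ.indicator f with hf₂def
  have hf₁m : Measurable f₁ := hf.indicator hAm
  have hf₂m : Measurable f₂ := hf.indicator hAm.compl
  have hind_nonneg : ∀ (s : Set E) y, 0 ≤ s.indicator f y := fun s y =>
    Set.indicator_nonneg (fun z _ => hf0 z) y
  have hind_le : ∀ (s : Set E) y, s.indicator f y ≤ max C 0 := by
    intro s y
    by_cases h : y ∈ s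
    · rw [Set.indicator_of_mem h]; exact (hC y).trans (le_max_left _ _)
    · rw [Set.indicator_of_notMem h]; exact le_max_right _ _
  have habs : ∀ y, ‖f y‖ ≤ C := fun y => by
    rw [Real.norm_eq_abs, abs_of_nonneg (hf0 y)]; exact hC y
  have habs' : ∀ (s : Set E) y, |s.indicator f y| ≤ max C 0 := fun s y => by
    rw [abs_of_nonneg (hind_nonneg s y)]; exact hind_le s y
  filter_upwards [hui α hα f hf hf0 ⟨C, hC⟩,
    hui α hα f₁ hf₁m (hind_nonneg A) ⟨max C 0, hind_le A⟩,
    hui α hα f₂ hf₂m (hind_nonneg Aᶜ) ⟨max C 0, hind_le Aᶜ⟩, hu']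
    with x h1 h2 h3 h4
  obtain ⟨heq, hint⟩ := h4
  have hmul : ∀ {w : E → ℝ} {D : ℝ}, (∀ y, |w y| ≤ D) → Measurable w →
      Integrable (fun y => u y * w y) (R.kernel α x) := by
    intro w D hD hwm
    have := hint.bdd_mul hwm.aestronglyMeasurable
      (ae_of_all _ fun y => by rw [Real.norm_eq_abs]; exact hD y)
    exact this.congr (Filter.Eventually.of_forall fun y => mul_comm _ _)
  have hif₁ : Integrable (fun y => u y * f₁ y) (R.kernel α x) := hmul (habs' A) hf₁m
  have hif₂ : Integrable (fun y => u y * f₂ y) (R.kernel α x) := hmul (habs' Aᶜ) hf₂m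
  have hf₁i : Integrable f₁ (R.kernel α x) := R.integrable_of_bdd hα x hf₁m (habs' A)
  have hf₂i : Integrable f₂ (R.kernel α x) := R.integrable_of_bdd hα x hf₂m (habs' Aᶜ)
  simp only [SubMarkovResolvent.opR] at h1 h2 h3 ⊢
  show (∫ y, |u y| * f y ∂(R.kernel α x)) = |u x| * ∫ y, f y ∂(R.kernel α x)
  set a₁ : ℝ := ∫ y, f₁ y ∂(R.kernel α x) with ha₁def
  set a₂ : ℝ := ∫ y, f₂ y ∂(R.kernel α x) with ha₂def
  have ha₁0 : 0 ≤ a₁ := integral_nonneg (hind_nonneg A)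
  have ha₂0 : 0 ≤ a₂ := integral_nonneg (hind_nonneg Aᶜ)
  have hfsplit : (∫ y, f y ∂(R.kernel α x)) = a₁ + a₂ := by
    rw [ha₁def, ha₂def, ← integral_add hf₁i hf₂i]
    refine integral_congr_ae (Filter.Eventually.of_forall fun y => ?_)
    show f y = f₁ y + f₂ y
    rw [hf₁def, hf₂def]
    by_cases h : y ∈ A
    · rw [Set.indicator_of_mem h, Set.indicator_of_notMem (by simpa using h)]; ring
    · rw [Set.indicator_of_notMem h, Set.indicator_of_mem (by simpa using h)]; ring
  -- the integral of |u| f equals u x * a₁ - u x * a₂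
  have hsplit : ∀ᵐ y ∂(R.kernel α x), |u y| * f y = u y * f₁ y - u y * f₂ y := by
    filter_upwards [heq] with y hy
    by_cases h : y ∈ A
    · have h0 : 0 ≤ u y := by rw [hy]; exact h
      rw [hf₁def, hf₂def, Set.indicator_of_mem h,
        Set.indicator_of_notMem (by simpa using h), abs_of_nonneg h0]
      ring
    · have h0 : u y ≤ 0 := by rw [hy]; exact le_of_lt (lt_of_not_ge h)
      rw [hf₁def, hf₂def, Set.indicator_of_notMem h,
        Set.indicator_of_mem (by simpa using h), abs_of_nonpos h0]
      ring
  have e1 : (∫ y, |u y| * f y ∂(R.kernel α x)) = u x * a₁ - u x * a₂ := by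
    rw [integral_congr_ae hsplit, integral_sub hif₁ hif₂, h2, h3]
  -- lower bound
  have hint_nonneg : 0 ≤ ∫ y, f y ∂(R.kernel α x) := integral_nonneg hf0
  have e2 : |u x| * (a₁ + a₂) ≤ u x * a₁ - u x * a₂ := by
    have c1 : |u x| * (a₁ + a₂) = |u x * ∫ y, f y ∂(R.kernel α x)| := by
      rw [abs_mul, abs_of_nonneg hint_nonneg, hfsplit]
    have c2 : |u x * ∫ y, f y ∂(R.kernel α x)| = |∫ y, u y * f y ∂(R.kernel α x)| := by
      rw [h1]
    have c3 : |∫ y, u y * f y ∂(R.kernel α x)| ≤ ∫ y, |u y| * |f y| ∂(R.kernel α x) :=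
      by simpa [Real.norm_eq_abs, abs_mul] using
        norm_integral_le_integral_norm (μ := R.kernel α x) (fun y => u y * f y)
    have c4 : (∫ y, |u y| * |f y| ∂(R.kernel α x)) = ∫ y, |u y| * f y ∂(R.kernel α x) := by
      refine integral_congr_ae (Filter.Eventually.of_forall fun y => ?_)
      show |u y| * |f y| = |u y| * f y
      rw [abs_of_nonneg (hf0 y)]
    rw [c1, c2]
    calc |∫ y, u y * f y ∂(R.kernel α x)| ≤ ∫ y, |u y| * |f y| ∂(R.kernel α x) := c3
      _ = ∫ y, |u y| * f y ∂(R.kernel α x) := c4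
      _ = u x * a₁ - u x * a₂ := e1
  -- upper bound
  have e3 : u x * a₁ - u x * a₂ ≤ |u x| * (a₁ + a₂) := by
    have c1 : u x * a₁ - u x * a₂ = u x * (a₁ - a₂) := by ring
    have c2 : u x * (a₁ - a₂) ≤ |u x * (a₁ - a₂)| := le_abs_self _
    have c3 : |u x * (a₁ - a₂)| = |u x| * |a₁ - a₂| := abs_mul _ _
    have c4 : |a₁ - a₂| ≤ a₁ + a₂ := abs_le.mpr ⟨by linarith, by linarith⟩
    have c5 : |u x| * |a₁ - a₂| ≤ |u x| * (a₁ + a₂) :=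
      mul_le_mul_of_nonneg_left c4 (abs_nonneg _)
    linarith
  rw [e1, hfsplit]
  linarith

end SubMarkovResolvent

/-- The `U`-invariant functions in `L^p(E,m)` form a vector lattice for the pointwise order:
sums, scalar multiples, absolute values and positive/negative parts of invariant functions
are invariant. -/
theorem invariant_vector_lattice {E : Type*} [MeasurableSpace E]
    (R : SubMarkovResolvent E) (m : MeasureTheory.Measure E) [MeasureTheory.SigmaFinite m]
    (hm : R.SubInvariant m) (p : ℝ≥0∞) (hp : 1 ≤ p)
    (u v : E → ℝ) (hu : MeasureTheory.MemLp u p m) (hv : MeasureTheory.MemLp v p m)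
    (hui : R.Invariant m u) (hvi : R.Invariant m v) (c : ℝ) :
    R.Invariant m (u + v) ∧ R.Invariant m (c • u) ∧
      R.Invariant m (fun x => |u x|) ∧
      R.Invariant m (fun x => max (u x) 0) ∧ R.Invariant m (fun x => max (-u x) 0) := by
  
  have habs : R.Invariant m (fun x => |u x|) := R.inv_abs hm hp hu hui
  have habsLp : MeasureTheory.MemLp (fun x => |u x|) p m := by
    simpa [Real.norm_eq_abs] using hu.norm
  refine ⟨R.inv_add hm hp hu hv hui hvi, R.inv_smul hui c, habs, ?_, ?_⟩
  · have h1 : R.Invariant m ((fun x => |u x|) + u) := R.inv_add hm hp habsLp hu habs hui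
    have h2 := R.inv_smul h1 (1/2 : ℝ)
    have heq : ((1/2 : ℝ) • ((fun x => |u x|) + u)) = fun x => max (u x) 0 := by
      funext x
      simp only [Pi.smul_apply, Pi.add_apply, smul_eq_mul]
      rcases le_total (u x) 0 with h | h
      · rw [abs_of_nonpos h, max_eq_right h]; ring
      · rw [abs_of_nonneg h, max_eq_left h]; ring
    exact heq ▸ h2
  · have huneg : MeasureTheory.MemLp ((-1 : ℝ) • u) p m := hu.const_smul _
    have hunegi : R.Invariant m ((-1 : ℝ) • u) := R.inv_smul hui (-1)
    have h1 : R.Invariant m ((fun x => |u x|) + (-1 : ℝ) • u) :=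
      R.inv_add hm hp habsLp huneg habs hunegi
    have h2 := R.inv_smul h1 (1/2 : ℝ)
    have heq : ((1/2 : ℝ) • ((fun x => |u x|) + (-1 : ℝ) • u)) = fun x => max (-u x) 0 := by
      funext x
      simp only [Pi.smul_apply, Pi.add_apply, smul_eq_mul]
      rcases le_total (u x) 0 with h | h
      · rw [abs_of_nonpos h, max_eq_left (by linarith)]; ring
      · rw [abs_of_nonneg h, max_eq_right (by linarith)]; ring
    exact heq ▸ h2
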